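/- Let P ∈ F[z] be a nonzero polynomial and let r > 0. Then P has exactly K(P,r) − k(P,r) roots of absolute value r, counted with multiplicity; that is, if P(z) = c z^{m_0} ∏_j (z − a_j)^{m_j} with the a_j nonzero and distinct, then ∑_{j : |a_j| = r} m_j = K(P,r) − k(P,r). -/

import Mathlib

open Filter Topology

variable {F : Type*} [NontriviallyNormedField F]

/-- Value of the power series with coefficients `a` at `z`. -/
noncomputable def psEval (a : ℕ → F) (z : F) : F := ∑' n : ℕ, a n * z ^ n

/-- Value of the Laurent series with coefficients `c` at `z`. -/
noncomputable def lEval (c : ℤ → F) (z : F) : F := ∑' n : ℤ, c n * z ^ n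

/-- Gauss norm `|f|_r = sup_n |a_n| r^n` of a power series. -/
noncomputable def pNorm (a : ℕ → F) (r : ℝ) : ℝ := ⨆ n : ℕ, ‖a n‖ * r ^ n

/-- Gauss norm `|f|_r = sup_n |c_n| r^n` of a Laurent series. -/
noncomputable def lNorm (c : ℤ → F) (r : ℝ) : ℝ := ⨆ n : ℤ, ‖c n‖ * r ^ n

/-- The Laurent series `c` is analytic on the annulus `A[r1,r2]`. -/
def LaurentOn (c : ℤ → F) (r1 r2 : ℝ) : Prop :=
  ∀ r : ℝ, r1 ≤ r → r ≤ r2 → Tendsto (fun n : ℤ => ‖c n‖ * r ^ n) cofinite (nhds 0)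

/-- The Laurent series `c` is analytic on `A[r1,∞)`. -/
def LaurentOnInfty (c : ℤ → F) (r1 : ℝ) : Prop :=
  ∀ r : ℝ, r1 ≤ r → Tendsto (fun n : ℤ => ‖c n‖ * r ^ n) cofinite (nhds 0)

/-- The power series `a` is analytic on the closed ball `B_{≤ r}`. -/
def PSOnClosed (a : ℕ → F) (r : ℝ) : Prop :=
  Tendsto (fun n : ℕ => ‖a n‖ * r ^ n) atTop (nhds 0)

/-- The power series `a` is analytic on the open ball `B_{< R}`. -/
def PSOnOpen (a : ℕ → F) (R : ℝ) : Prop :=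
  ∀ r : ℝ, 0 < r → r < R → Tendsto (fun n : ℕ => ‖a n‖ * r ^ n) atTop (nhds 0)

/-- The power series `a` is entire: it converges on all of `F`. -/
def Entire (a : ℕ → F) : Prop :=
  ∀ r : ℝ, 0 < r → Tendsto (fun n : ℕ => ‖a n‖ * r ^ n) atTop (nhds 0)

/-- `k(f,r)` for a Laurent series. -/
noncomputable def kk (c : ℤ → F) (r : ℝ) : ℤ := sInf {n : ℤ | ‖c n‖ * r ^ n = lNorm c r}

/-- `K(f,r)` for a Laurent series. -/
noncomputable def KK (c : ℤ → F) (r : ℝ) : ℤ := sSup {n : ℤ | ‖c n‖ * r ^ n = lNorm c r}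

/-- Product of two Laurent series. -/
noncomputable def laurentMul (c d : ℤ → F) : ℤ → F := fun n => ∑' i : ℤ, c i * d (n - i)

/-- The Laurent series `1`. -/
noncomputable def laurentOne : ℤ → F := fun n => if n = 0 then 1 else 0

/-- Gauss norm of a polynomial. -/
noncomputable def pgNorm (P : Polynomial F) (r : ℝ) : ℝ := ⨆ n : ℕ, ‖P.coeff n‖ * r ^ n

/-- `k(P,r)` for a polynomial. -/
noncomputable def kP (P : Polynomial F) (r : ℝ) : ℕ :=
  sInf {n : ℕ | ‖P.coeff n‖ * r ^ n = pgNorm P r}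

/-- `K(P,r)` for a polynomial. -/
noncomputable def KP (P : Polynomial F) (r : ℝ) : ℕ :=
  sSup {n : ℕ | ‖P.coeff n‖ * r ^ n = pgNorm P r}

/-- A polynomial regarded as a Laurent series. -/
noncomputable def polyToLaurent (P : Polynomial F) : ℤ → F :=
  fun n => if 0 ≤ n then P.coeff n.toNat else 0

/-- `f` vanishes to order exactly `m` at `z0`, as witnessed by a convergent local
power series expansion of `f` about `z0`. -/
def HasOrderAt (f : F → F) (z0 : F) (m : ℕ) : Prop :=
  ∃ δ > (0 : ℝ), ∃ b : ℕ → F,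
    (∀ z : F, ‖z - z0‖ < δ → f z = ∑' n : ℕ, b n * (z - z0) ^ n) ∧
    (∀ j < m, b j = 0) ∧ b m ≠ 0

/-- Order of vanishing at `0` of a power series. -/
noncomputable def ord0 (c : ℕ → F) : ℕ := sInf {n : ℕ | c n ≠ 0}

/-- Radius of convergence of a power series: the sup of the radii `r` such that
the terms `|c_j| r^j` tend to `0`. -/
noncomputable def convRadius (c : ℕ → F) : ENNReal :=
  ⨆ (r : NNReal) (_ : Tendsto (fun j : ℕ => ‖c j‖ * (r : ℝ) ^ j) atTop (nhds 0)), (r : ENNReal)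

section VPaux

variable {F : Type*} [NontriviallyNormedField F]

namespace VP

lemma sum_le (hna : IsNonarchimedean (fun x : F => ‖x‖)) {ι : Type*} (s : Finset ι)
    (f : ι → F) {B : ℝ} (hB : 0 ≤ B) (h : ∀ i ∈ s, ‖f i‖ ≤ B) :
    ‖∑ i ∈ s, f i‖ ≤ B := by
  classical
  induction s using Finset.induction_on with
  | empty => simpa using hB
  | insert _ _ hx ih =>
      rw [Finset.sum_insert hx]
      exact le_trans (hna _ _) (max_le (h _ (Finset.mem_insert_self _ _))
        (ih fun i hi => h i (Finset.mem_insert_of_mem hi)))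

lemma sum_lt (hna : IsNonarchimedean (fun x : F => ‖x‖)) {ι : Type*} (s : Finset ι)
    (f : ι → F) {B : ℝ} (hB : 0 < B) (h : ∀ i ∈ s, ‖f i‖ < B) :
    ‖∑ i ∈ s, f i‖ < B := by
  classical
  induction s using Finset.induction_on with
  | empty => simpa using hB
  | insert _ _ hx ih =>
      rw [Finset.sum_insert hx]
      exact lt_of_le_of_lt (hna _ _) (max_lt (h _ (Finset.mem_insert_self _ _))
        (ih fun i hi => h i (Finset.mem_insert_of_mem hi)))

lemma add_eq (hna : IsNonarchimedean (fun x : F => ‖x‖)) {a b : F} (h : ‖b‖ < ‖a‖) :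
    ‖a + b‖ = ‖a‖ := by
  refine le_antisymm (le_trans (hna a b) (max_le le_rfl h.le)) ?_
  have h2 : ‖a‖ ≤ max ‖a + b‖ ‖-b‖ := by
    have := hna (a + b) (-b); simpa using this
  rw [norm_neg] at h2
  rcases le_max_iff.1 h2 with h3 | h3
  · exact h3
  · linarith

lemma sum_eq (hna : IsNonarchimedean (fun x : F => ‖x‖)) {ι : Type*} (s : Finset ι)
    (f : ι → F) {B : ℝ} (hB : 0 < B) {i0 : ι} (hi0 : i0 ∈ s) (hf0 : ‖f i0‖ = B)
    (h : ∀ i ∈ s, i ≠ i0 → ‖f i‖ < B) :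
    ‖∑ i ∈ s, f i‖ = B := by
  classical
  rw [← Finset.add_sum_erase s f hi0]
  have hrest : ‖∑ i ∈ s.erase i0, f i‖ < B := by
    refine sum_lt hna _ _ hB fun i hi => h i (Finset.mem_of_mem_erase hi)
      (Finset.ne_of_mem_erase hi)
  rw [← hf0] at hrest ⊢
  exact add_eq hna hrest

lemma le_sup'_aux (P : Polynomial F) {r : ℝ} (hr : 0 < r) (n : ℕ) :
    ‖P.coeff n‖ * r ^ n ≤
      (Finset.range (P.natDegree + 1)).sup' ⟨0, by simp⟩ (fun m => ‖P.coeff m‖ * r ^ m) := by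
  by_cases h : n ≤ P.natDegree
  · exact Finset.le_sup' (fun m => ‖P.coeff m‖ * r ^ m)
      (Finset.mem_range.2 (Nat.lt_succ_of_le h))
  · rw [Polynomial.coeff_eq_zero_of_natDegree_lt (not_le.1 h), norm_zero, zero_mul]
    refine le_trans (by positivity : (0:ℝ) ≤ ‖P.coeff 0‖ * r ^ 0)
      (Finset.le_sup' (fun m => ‖P.coeff m‖ * r ^ m)
        (Finset.mem_range.2 (Nat.succ_pos _)))

lemma pg_bdd (P : Polynomial F) {r : ℝ} (hr : 0 < r) :
    BddAbove (Set.range fun n : ℕ => ‖P.coeff n‖ * r ^ n) := by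
  refine ⟨(Finset.range (P.natDegree + 1)).sup' ⟨0, by simp⟩
    (fun m => ‖P.coeff m‖ * r ^ m), ?_⟩
  rintro x ⟨n, rfl⟩
  exact le_sup'_aux P hr n

lemma pg_le (P : Polynomial F) {r : ℝ} (hr : 0 < r) (n : ℕ) :
    ‖P.coeff n‖ * r ^ n ≤ pgNorm P r :=
  le_ciSup (pg_bdd P hr) n

lemma pg_exists (P : Polynomial F) {r : ℝ} (hr : 0 < r) :
    ∃ n : ℕ, ‖P.coeff n‖ * r ^ n = pgNorm P r := by
  obtain ⟨i, _, hSi⟩ := Finset.exists_mem_eq_sup' (⟨0, by simp⟩ :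
      (Finset.range (P.natDegree + 1)).Nonempty) (fun m => ‖P.coeff m‖ * r ^ m)
  refine ⟨i, le_antisymm (pg_le P hr i) ?_⟩
  refine le_trans (ciSup_le fun n => le_sup'_aux P hr n) (le_of_eq hSi)

lemma pg_pos {P : Polynomial F} (hP : P ≠ 0) {r : ℝ} (hr : 0 < r) :
    0 < pgNorm P r := by
  refine lt_of_lt_of_le ?_ (pg_le P hr P.natDegree)
  have : P.coeff P.natDegree ≠ 0 := by
    rw [Polynomial.coeff_natDegree]
    exact Polynomial.leadingCoeff_ne_zero.2 hP
  exact mul_pos (norm_pos_iff.2 this) (pow_pos hr _)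

lemma mem_le_natDegree {P : Polynomial F} (hP : P ≠ 0) {r : ℝ} (hr : 0 < r) {n : ℕ}
    (hn : ‖P.coeff n‖ * r ^ n = pgNorm P r) : n ≤ P.natDegree := by
  by_contra h
  rw [Polynomial.coeff_eq_zero_of_natDegree_lt (not_le.1 h)] at hn
  have := pg_pos hP hr
  simp at hn
  rw [← hn] at this
  simp at this

lemma M_bdd {P : Polynomial F} (hP : P ≠ 0) {r : ℝ} (hr : 0 < r) :
    BddAbove {n : ℕ | ‖P.coeff n‖ * r ^ n = pgNorm P r} :=
  ⟨P.natDegree, fun _ hn => mem_le_natDegree hP hr hn⟩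

lemma kP_mem {P : Polynomial F} (hP : P ≠ 0) {r : ℝ} (hr : 0 < r) :
    ‖P.coeff (kP P r)‖ * r ^ (kP P r) = pgNorm P r :=
  Nat.sInf_mem (pg_exists P hr)

lemma KP_mem {P : Polynomial F} (hP : P ≠ 0) {r : ℝ} (hr : 0 < r) :
    ‖P.coeff (KP P r)‖ * r ^ (KP P r) = pgNorm P r :=
  Nat.sSup_mem (pg_exists P hr) (M_bdd hP hr)

lemma lt_of_lt_kP {P : Polynomial F} (hP : P ≠ 0) {r : ℝ} (hr : 0 < r) {n : ℕ}
    (hn : n < kP P r) : ‖P.coeff n‖ * r ^ n < pgNorm P r :=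
  lt_of_le_of_ne (pg_le P hr n) (Nat.notMem_of_lt_sInf hn)

lemma lt_of_KP_lt {P : Polynomial F} (hP : P ≠ 0) {r : ℝ} (hr : 0 < r) {n : ℕ}
    (hn : KP P r < n) : ‖P.coeff n‖ * r ^ n < pgNorm P r := by
  refine lt_of_le_of_ne (pg_le P hr n) (fun h => absurd (le_csSup (M_bdd hP hr) h) ?_)
  exact not_le.2 hn

end VP

end VPaux

section VPaux2

variable {F : Type*} [NontriviallyNormedField F]

namespace VP

lemma mul_facts (hna : IsNonarchimedean (fun x : F => ‖x‖)) {r : ℝ} (hr : 0 < r)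
    (P Q : Polynomial F) (hP : P ≠ 0) (hQ : Q ≠ 0) :
    pgNorm (P * Q) r = pgNorm P r * pgNorm Q r ∧
      kP (P * Q) r = kP P r + kP Q r ∧ KP (P * Q) r = KP P r + KP Q r := by
  have hPQ : P * Q ≠ 0 := mul_ne_zero hP hQ
  have hpP : 0 < pgNorm P r := pg_pos hP hr
  have hpQ : 0 < pgNorm Q r := pg_pos hQ hr
  have hB : 0 < pgNorm P r * pgNorm Q r := mul_pos hpP hpQ
  set B := pgNorm P r * pgNorm Q r with hBdef
  have hterm : ∀ n : ℕ, ∀ ij ∈ Finset.HasAntidiagonal.antidiagonal n,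
      ‖P.coeff ij.1 * Q.coeff ij.2‖ * r ^ n
        = (‖P.coeff ij.1‖ * r ^ ij.1) * (‖Q.coeff ij.2‖ * r ^ ij.2) := by
    intro n ij hij
    have h : ij.1 + ij.2 = n := Finset.HasAntidiagonal.mem_antidiagonal.1 hij
    rw [norm_mul, ← h, pow_add]; ring
  have hstrict : ∀ i j : ℕ,
      (‖P.coeff i‖ * r ^ i < pgNorm P r ∨ ‖Q.coeff j‖ * r ^ j < pgNorm Q r) →
      (‖P.coeff i‖ * r ^ i) * (‖Q.coeff j‖ * r ^ j) < B := by
    intro i j h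
    rcases h with h | h
    · calc (‖P.coeff i‖ * r ^ i) * (‖Q.coeff j‖ * r ^ j)
          ≤ (‖P.coeff i‖ * r ^ i) * pgNorm Q r :=
            mul_le_mul_of_nonneg_left (pg_le Q hr j) (by positivity)
        _ < B := mul_lt_mul_of_pos_right h hpQ
    · calc (‖P.coeff i‖ * r ^ i) * (‖Q.coeff j‖ * r ^ j)
          ≤ pgNorm P r * (‖Q.coeff j‖ * r ^ j) :=
            mul_le_mul_of_nonneg_right (pg_le P hr i) (by positivity)
        _ < B := mul_lt_mul_of_pos_left h hpP
  have htle : ∀ n : ℕ, ∀ ij ∈ Finset.HasAntidiagonal.antidiagonal n,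
      ‖P.coeff ij.1 * Q.coeff ij.2‖ * r ^ n ≤ B := by
    intro n ij hij
    rw [hterm n ij hij]
    exact mul_le_mul (pg_le P hr _) (pg_le Q hr _) (by positivity) hpP.le
  -- general upper bound
  have hub : ∀ n : ℕ, ‖(P * Q).coeff n‖ * r ^ n ≤ B := by
    intro n
    rw [Polynomial.coeff_mul, ← le_div_iff₀ (pow_pos hr n)]
    refine sum_le hna _ _ (by positivity) fun ij hij => ?_
    rw [le_div_iff₀ (pow_pos hr n)]
    exact htle n ij hij
  -- dominant term computation
  have hdom : ∀ i0 j0 : ℕ,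
      ‖P.coeff i0‖ * r ^ i0 = pgNorm P r → ‖Q.coeff j0‖ * r ^ j0 = pgNorm Q r →
      (∀ i j : ℕ, i + j = i0 + j0 → (i, j) ≠ (i0, j0) →
        (‖P.coeff i‖ * r ^ i < pgNorm P r ∨ ‖Q.coeff j‖ * r ^ j < pgNorm Q r)) →
      ‖(P * Q).coeff (i0 + j0)‖ * r ^ (i0 + j0) = B := by
    intro i0 j0 hi0 hj0 hsplit
    rw [Polynomial.coeff_mul]
    have hrn : (0:ℝ) < r ^ (i0 + j0) := pow_pos hr _
    rw [← eq_div_iff hrn.ne']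
    have hmem00 : ((i0, j0) : ℕ × ℕ) ∈ Finset.HasAntidiagonal.antidiagonal (i0 + j0) :=
      Finset.HasAntidiagonal.mem_antidiagonal.2 rfl
    refine sum_eq hna _ _ (by positivity) hmem00 ?_ ?_
    · rw [eq_div_iff hrn.ne', hterm _ ((i0, j0) : ℕ × ℕ) hmem00]
      dsimp only
      rw [hi0, hj0]
    · rintro ⟨i, j⟩ hij hne
      rw [lt_div_iff₀ hrn, hterm _ ((i, j) : ℕ × ℕ) hij]
      exact hstrict i j (hsplit i j (Finset.HasAntidiagonal.mem_antidiagonal.1 hij) hne)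
  -- strict bound away from the dominant index
  have hlt : ∀ n : ℕ,
      (∀ i j : ℕ, i + j = n →
        (‖P.coeff i‖ * r ^ i < pgNorm P r ∨ ‖Q.coeff j‖ * r ^ j < pgNorm Q r)) →
      ‖(P * Q).coeff n‖ * r ^ n < B := by
    intro n hsplit
    rw [Polynomial.coeff_mul, ← lt_div_iff₀ (pow_pos hr n)]
    refine sum_lt hna _ _ (by positivity) fun ij hij => ?_
    rw [lt_div_iff₀ (pow_pos hr n), hterm _ ij hij]
    exact hstrict ij.1 ij.2 (hsplit ij.1 ij.2 (Finset.HasAntidiagonal.mem_antidiagonal.1 hij))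
  -- the two dominant indices
  have hdomk : ‖(P * Q).coeff (kP P r + kP Q r)‖ * r ^ (kP P r + kP Q r) = B := by
    refine hdom _ _ (kP_mem hP hr) (kP_mem hQ hr) fun i j hsum hne => ?_
    have : i < kP P r ∨ j < kP Q r := by
      by_contra hcon
      push_neg at hcon
      have hi : i = kP P r := by omega
      have hj : j = kP Q r := by omega
      exact hne (by rw [hi, hj])
    rcases this with h | h
    · exact Or.inl (lt_of_lt_kP hP hr h)
    · exact Or.inr (lt_of_lt_kP hQ hr h)
  have hdomK : ‖(P * Q).coeff (KP P r + KP Q r)‖ * r ^ (KP P r + KP Q r) = B := by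
    refine hdom _ _ (KP_mem hP hr) (KP_mem hQ hr) fun i j hsum hne => ?_
    have : KP P r < i ∨ KP Q r < j := by
      by_contra hcon
      push_neg at hcon
      have hi : i = KP P r := by omega
      have hj : j = KP Q r := by omega
      exact hne (by rw [hi, hj])
    rcases this with h | h
    · exact Or.inl (lt_of_KP_lt hP hr h)
    · exact Or.inr (lt_of_KP_lt hQ hr h)
  -- Gauss norm multiplicativity
  have hmul : pgNorm (P * Q) r = B := by
    refine le_antisymm (ciSup_le hub) ?_
    rw [← hdomk]
    exact pg_le (P * Q) hr _
  refine ⟨hmul, ?_, ?_⟩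
  · -- kP additive
    have hmem : kP P r + kP Q r ∈
        {n : ℕ | ‖(P * Q).coeff n‖ * r ^ n = pgNorm (P * Q) r} := by
      rw [Set.mem_setOf_eq, hmul]; exact hdomk
    have hlow : ∀ n : ℕ, n < kP P r + kP Q r →
        ‖(P * Q).coeff n‖ * r ^ n < pgNorm (P * Q) r := by
      intro n hn
      rw [hmul]
      refine hlt n fun i j hsum => ?_
      have : i < kP P r ∨ j < kP Q r := by omega
      rcases this with h | h
      · exact Or.inl (lt_of_lt_kP hP hr h)
      · exact Or.inr (lt_of_lt_kP hQ hr h)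
    refine le_antisymm (Nat.sInf_le hmem) (le_of_not_gt fun h => ?_)
    have hmem' := Nat.sInf_mem (⟨_, hmem⟩ :
      {n : ℕ | ‖(P * Q).coeff n‖ * r ^ n = pgNorm (P * Q) r}.Nonempty)
    exact absurd hmem' (ne_of_lt (hlow _ h))
  · -- KP additive
    have hmem : KP P r + KP Q r ∈
        {n : ℕ | ‖(P * Q).coeff n‖ * r ^ n = pgNorm (P * Q) r} := by
      rw [Set.mem_setOf_eq, hmul]; exact hdomK
    have hhigh : ∀ n : ℕ, KP P r + KP Q r < n →
        ‖(P * Q).coeff n‖ * r ^ n < pgNorm (P * Q) r := by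
      intro n hn
      rw [hmul]
      refine hlt n fun i j hsum => ?_
      have : KP P r < i ∨ KP Q r < j := by omega
      rcases this with h | h
      · exact Or.inl (lt_of_KP_lt hP hr h)
      · exact Or.inr (lt_of_KP_lt hQ hr h)
    refine le_antisymm (le_of_not_gt fun h => ?_) (le_csSup (M_bdd hPQ hr) hmem)
    have hmem' := Nat.sSup_mem (⟨_, hmem⟩ :
      {n : ℕ | ‖(P * Q).coeff n‖ * r ^ n = pgNorm (P * Q) r}.Nonempty) (M_bdd hPQ hr)
    exact absurd hmem' (ne_of_lt (hhigh _ h))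

end VP

end VPaux2

section VPaux3

variable {F : Type*} [NontriviallyNormedField F]

namespace VP

lemma diff_C {r : ℝ} (hr : 0 < r) {c : F} (hc : c ≠ 0) :
    KP (Polynomial.C c) r = 0 ∧ kP (Polynomial.C c) r = 0 := by
  have hC : (Polynomial.C c : Polynomial F) ≠ 0 := Polynomial.C_ne_zero.2 hc
  have hdeg : (Polynomial.C c : Polynomial F).natDegree = 0 := Polynomial.natDegree_C c
  have hK := mem_le_natDegree hC hr (KP_mem hC hr)
  have hk := mem_le_natDegree hC hr (kP_mem hC hr)
  rw [hdeg] at hK hk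
  omega

lemma diff_lin (hr : 0 < (r : ℝ)) (a : F) :
    (KP (Polynomial.X - Polynomial.C a) r : ℤ) - (kP (Polynomial.X - Polynomial.C a) r : ℤ)
      = if ‖a‖ = r then 1 else 0 := by
  set L : Polynomial F := Polynomial.X - Polynomial.C a with hL
  have hL0 : L ≠ 0 := Polynomial.X_sub_C_ne_zero a
  have hdeg : L.natDegree = 1 := Polynomial.natDegree_X_sub_C a
  have hc0 : ‖L.coeff 0‖ * r ^ 0 = ‖a‖ := by
    simp [hL, Polynomial.coeff_sub]
  have hc1 : ‖L.coeff 1‖ * r ^ 1 = r := by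
    simp [hL, Polynomial.coeff_sub, Polynomial.coeff_X_one]
  have hA : ‖a‖ ≤ pgNorm L r := le_trans (le_of_eq hc0.symm) (pg_le L hr 0)
  have hR : r ≤ pgNorm L r := le_trans (le_of_eq hc1.symm) (pg_le L hr 1)
  have hub : pgNorm L r ≤ max ‖a‖ r := by
    refine ciSup_le fun n => ?_
    match n with
    | 0 => rw [hc0]; exact le_max_left _ _
    | 1 => rw [hc1]; exact le_max_right _ _
    | (m + 2) =>
        rw [Polynomial.coeff_eq_zero_of_natDegree_lt (by rw [hdeg]; omega), norm_zero,
          zero_mul]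
        exact le_max_of_le_right hr.le
  have hKle := mem_le_natDegree hL0 hr (KP_mem hL0 hr)
  have hkle := mem_le_natDegree hL0 hr (kP_mem hL0 hr)
  rw [hdeg] at hKle hkle
  by_cases hcase : ‖a‖ = r
  · rw [if_pos hcase]
    have hpg : pgNorm L r = r :=
      le_antisymm (le_trans hub (max_le (le_of_eq hcase) le_rfl)) hR
    have hmem0 : 0 ∈ {n : ℕ | ‖L.coeff n‖ * r ^ n = pgNorm L r} := by
      rw [Set.mem_setOf_eq, hc0, hcase, hpg]
    have hmem1 : 1 ∈ {n : ℕ | ‖L.coeff n‖ * r ^ n = pgNorm L r} := by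
      rw [Set.mem_setOf_eq, hc1, hpg]
    have hk0 : kP L r = 0 := Nat.le_zero.1 (Nat.sInf_le hmem0)
    have hK1 : KP L r = 1 := le_antisymm hKle (le_csSup (M_bdd hL0 hr) hmem1)
    rw [hk0, hK1]; norm_num
  · rw [if_neg hcase]
    rcases lt_or_gt_of_ne hcase with hlt | hgt
    · -- ‖a‖ < r : both k and K equal 1
      have hpg : pgNorm L r = r := le_antisymm (le_trans hub (max_le hlt.le le_rfl)) hR
      have hnot0 : ∀ n : ℕ, ‖L.coeff n‖ * r ^ n = pgNorm L r → n = 1 := by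
        intro n hn
        have hn1 : n ≤ 1 := by have := mem_le_natDegree hL0 hr hn; omega
        interval_cases n
        · rw [hc0, hpg] at hn; exact absurd hn (ne_of_lt hlt)
        · rfl
      rw [hnot0 _ (KP_mem hL0 hr), hnot0 _ (kP_mem hL0 hr)]; ring
    · -- r < ‖a‖ : both k and K equal 0
      have hpg : pgNorm L r = ‖a‖ := le_antisymm (le_trans hub (max_le le_rfl hgt.le)) hA
      have hnot1 : ∀ n : ℕ, ‖L.coeff n‖ * r ^ n = pgNorm L r → n = 0 := by
        intro n hn
        have hn1 : n ≤ 1 := by have := mem_le_natDegree hL0 hr hn; omega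
        interval_cases n
        · rfl
        · rw [hc1, hpg] at hn; exact absurd hn (ne_of_lt hgt)
      rw [hnot1 _ (KP_mem hL0 hr), hnot1 _ (kP_mem hL0 hr)]; ring

open scoped Classical in
lemma aux_count (hna : IsNonarchimedean (fun x : F => ‖x‖)) {r : ℝ} (hr : 0 < r)
    (c : F) (hc : c ≠ 0) (s : Multiset F) :
    ((s.filter fun z : F => ‖z‖ = r).card : ℤ)
      = (KP (Polynomial.C c * (s.map fun a => Polynomial.X - Polynomial.C a).prod) r : ℤ)
        - (kP (Polynomial.C c * (s.map fun a => Polynomial.X - Polynomial.C a).prod) r : ℤ) := by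
  induction s using Multiset.induction_on with
  | empty =>
      simp [diff_C hr hc]
  | cons a s ih =>
      have hQ0 : Polynomial.C c * (s.map fun a => Polynomial.X - Polynomial.C a).prod ≠ 0 := by
        refine mul_ne_zero (Polynomial.C_ne_zero.2 hc) (Multiset.prod_ne_zero ?_)
        intro hmem
        obtain ⟨b, _, hb⟩ := Multiset.mem_map.1 hmem
        exact Polynomial.X_sub_C_ne_zero b hb
      have hfac : Polynomial.C c * ((a ::ₘ s).map fun a => Polynomial.X - Polynomial.C a).prod
          = (Polynomial.X - Polynomial.C a)
            * (Polynomial.C c * (s.map fun a => Polynomial.X - Polynomial.C a).prod) := by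
        rw [Multiset.map_cons, Multiset.prod_cons]; ring
      rw [hfac]
      obtain ⟨-, hk, hK⟩ := mul_facts hna hr (Polynomial.X - Polynomial.C a) _
        (Polynomial.X_sub_C_ne_zero a) hQ0
      rw [hk, hK, Multiset.filter_cons, Multiset.card_add]
      have hlin := diff_lin hr a
      push_cast
      split_ifs with h
      · rw [if_pos h] at hlin
        simp only [Multiset.card_singleton]
        push_cast
        linarith [ih, hlin]
      · rw [if_neg h] at hlin
        simp only [Multiset.card_zero]
        push_cast
        linarith [ih, hlin]

end VP

end VPaux3

open scoped Classical in
/-- **Valuation polygon for polynomials.** A nonzero polynomial `P` has exactly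
`K(P,r) − k(P,r)` roots of absolute value `r`, counted with multiplicity. -/
theorem stmt10 {F : Type*} [NontriviallyNormedField F] [CompleteSpace F] [IsAlgClosed F]
    (hna : IsNonarchimedean (fun x : F => ‖x‖))
    (P : Polynomial F) (hP : P ≠ 0) (r : ℝ) (hr : 0 < r) :
    (((P.roots.filter fun z : F => ‖z‖ = r).card : ℤ)) = (KP P r : ℤ) - (kP P r : ℤ) := by
  have hsplit : Multiset.card P.roots = P.natDegree :=
    (Polynomial.splits_iff_card_roots).1 (IsAlgClosed.splits P)
  have hfac := Polynomial.C_leadingCoeff_mul_prod_multiset_X_sub_C hsplit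
  have h := VP.aux_count hna hr P.leadingCoeff (Polynomial.leadingCoeff_ne_zero.2 hP) P.roots
  rw [hfac] at h
  exact h
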